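/- Let n > 1 be an integer with prime factorization n = p_1^{a_1}···p_r^{a_r}. For every choice function x assigning to each i ∈ {1, …, r} a value x_i ∈ {1, 2}, the real number Π_{i=1}^r λ_{x_i}^{(i)} is an eigenvalue of the adjacency matrix A(n) of the modified divisor prime graph G*_Dp(n), where λ_1^{(i)} = (1 + √(4a_i+1))/2 and λ_2^{(i)} = (1 − √(4a_i+1))/2. -/

import Mathlib

open Finset

private noncomputable def ggg (c : ℕ → ℝ) (n v : ℕ) : ℝ :=
  ∏ p ∈ n.primeFactors, if p ∣ v then 1 else c p

private lemma sum_div_coprime_mul {a b : ℕ} (ha : a ≠ 0) (hb : b ≠ 0)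
    (hab : Nat.Coprime a b) (f : ℕ → ℝ) :
    ∑ v ∈ (a * b).divisors, f v
      = ∑ va ∈ a.divisors, ∑ vb ∈ b.divisors, f (va * vb) := by
  rw [← Finset.sum_product']
  refine (Finset.sum_nbij' (i := fun q => q.1 * q.2) (j := fun v => (v.gcd a, v.gcd b))
    ?_ ?_ ?_ ?_ ?_).symm
  · rintro ⟨va, vb⟩ hq
    simp only [Finset.mem_product, Nat.mem_divisors] at hq
    exact Nat.mem_divisors.2 ⟨mul_dvd_mul hq.1.1 hq.2.1, mul_ne_zero ha hb⟩
  · intro v hv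
    simp only [Finset.mem_product, Nat.mem_divisors]
    exact ⟨⟨Nat.gcd_dvd_right _ _, ha⟩, ⟨Nat.gcd_dvd_right _ _, hb⟩⟩
  · rintro ⟨va, vb⟩ hq
    simp only [Finset.mem_product, Nat.mem_divisors] at hq
    have h1 : Nat.gcd (va * vb) a = va := by
      rw [Nat.Coprime.gcd_mul_right_cancel va (hab.symm.coprime_dvd_left hq.2.1)]
      exact Nat.gcd_eq_left hq.1.1
    have h2 : Nat.gcd (va * vb) b = vb := by
      rw [Nat.Coprime.gcd_mul_left_cancel vb (hab.coprime_dvd_left hq.1.1)]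
      exact Nat.gcd_eq_left hq.2.1
    simp [h1, h2]
  · intro v hv
    exact (Nat.gcd_mul_gcd_eq_iff_dvd_mul_of_coprime hab).2 (Nat.mem_divisors.1 hv).1
  · intros; rfl

private lemma key (c : ℕ → ℝ) (n : ℕ) :
    n ≠ 0 →
      (∀ p ∈ n.primeFactors, c p ^ 2 = c p + (n.factorization p : ℝ)) →
      ∀ u, u ∣ n →
        (∑ v ∈ n.divisors, if Nat.gcd u v = 1 then ggg c n v else 0)
          = (∏ p ∈ n.primeFactors, c p) * ggg c n u := by
  induction n using Nat.recOnPosPrimePosCoprime with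
  | zero => intro h; exact absurd rfl h
  | one =>
    intro _ _ u hu
    rw [Nat.dvd_one] at hu; subst hu
    simp [ggg]
  | prime_pow p k hpp hk =>
    intro hn0 hquad u hu
    have pp : Nat.Prime p := hpp
    have hpf : (p ^ k).primeFactors = {p} :=
      Nat.primeFactors_prime_pow hk.ne' pp
    have hgg : ∀ v, ggg c (p ^ k) v = if p ∣ v then 1 else c p := by
      intro v; rw [ggg, hpf, Finset.prod_singleton]
    have hck : c p ^ 2 = c p + (k : ℝ) := by
      have := hquad p (by simp [hpf])
      rwa [pp.factorization_pow, Finsupp.single_eq_same] at this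
    obtain ⟨j, hj, rfl⟩ := (Nat.dvd_prime_pow pp).1 hu
    rw [Nat.sum_divisors_prime_pow pp, hpf, Finset.prod_singleton]
    rcases Nat.eq_zero_or_pos j with rfl | hjpos
    · have : ∀ i ∈ Finset.range (k + 1),
          (if Nat.gcd (p ^ 0) (p ^ i) = 1 then ggg c (p ^ k) (p ^ i) else 0)
            = if p ∣ p ^ i then 1 else c p := by
        intro i _; simp [Nat.gcd_one_left, hgg]
      rw [Finset.sum_congr rfl this, Finset.sum_range_succ']
      have h1 : ∀ i ∈ Finset.range k, (if p ∣ p ^ (i + 1) then 1 else c p) = (1 : ℝ) := by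
        intro i _; simp [dvd_pow_self p (Nat.succ_ne_zero i)]
      rw [Finset.sum_congr rfl h1, Finset.sum_const, Finset.card_range]
      rw [hgg]
      simp only [pow_zero, Nat.dvd_one]
      rw [nsmul_eq_mul, mul_one, if_neg pp.one_lt.ne']
      nlinarith [hck]
    · have hnd : ∀ i, ¬ (Nat.gcd (p ^ j) (p ^ (i + 1)) = 1) := by
        intro i h
        have : p ∣ Nat.gcd (p ^ j) (p ^ (i + 1)) :=
          Nat.dvd_gcd (dvd_pow_self p hjpos.ne') (dvd_pow_self p (Nat.succ_ne_zero i))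
        rw [h] at this
        exact pp.one_lt.ne' (Nat.dvd_one.1 this)
      rw [Finset.sum_range_succ']
      have h1 : ∀ i ∈ Finset.range k,
          (if Nat.gcd (p ^ j) (p ^ (i + 1)) = 1 then ggg c (p ^ k) (p ^ (i + 1)) else 0) = (0:ℝ) := by
        intro i _; rw [if_neg (hnd i)]
      rw [Finset.sum_congr rfl h1, Finset.sum_const, Finset.card_range]
      rw [hgg, hgg]
      have e0 : Nat.gcd (p ^ j) (p ^ 0) = 1 := by simp
      rw [smul_zero, zero_add, if_pos e0, pow_zero,
        if_neg (by simpa [Nat.dvd_one] using pp.one_lt.ne'),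
        if_pos (dvd_pow_self p hjpos.ne'), mul_one]
  | coprime a b ha hb hab iha ihb =>
    intro hn0 hquad u hu
    have hA0 : a ≠ 0 := by omega
    have hB0 : b ≠ 0 := by omega
    have hpf : (a * b).primeFactors = a.primeFactors ∪ b.primeFactors :=
      Nat.primeFactors_mul hA0 hB0
    have hdisj : Disjoint a.primeFactors b.primeFactors :=
      Nat.Coprime.disjoint_primeFactors hab
    have cab : ∀ {s t : ℕ}, s ∣ a → t ∣ b → Nat.Coprime s t := fun hs ht =>
      (hab.coprime_dvd_left hs).coprime_dvd_right ht
    have hndb : ∀ p ∈ a.primeFactors, ¬ p ∣ b := by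
      intro p hpa hd
      exact (Nat.prime_of_mem_primeFactors hpa).one_lt.ne'
        ((Nat.Coprime.coprime_dvd_left (Nat.dvd_of_mem_primeFactors hpa) hab).eq_one_of_dvd hd)
    have hnda : ∀ p ∈ b.primeFactors, ¬ p ∣ a := by
      intro p hpb hd
      exact (Nat.prime_of_mem_primeFactors hpb).one_lt.ne'
        ((Nat.Coprime.coprime_dvd_left (Nat.dvd_of_mem_primeFactors hpb) hab.symm).eq_one_of_dvd hd)
    have hquada : ∀ p ∈ a.primeFactors, c p ^ 2 = c p + (a.factorization p : ℝ) := by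
      intro p hpa
      have h := hquad p (by rw [hpf]; exact Finset.mem_union_left _ hpa)
      rwa [Nat.factorization_mul hA0 hB0, Finsupp.add_apply,
        Nat.factorization_eq_zero_of_not_dvd (hndb p hpa), add_zero] at h
    have hquadb : ∀ p ∈ b.primeFactors, c p ^ 2 = c p + (b.factorization p : ℝ) := by
      intro p hpb
      have h := hquad p (by rw [hpf]; exact Finset.mem_union_right _ hpb)
      rwa [Nat.factorization_mul hA0 hB0, Finsupp.add_apply,
        Nat.factorization_eq_zero_of_not_dvd (hnda p hpb), zero_add] at h
    have hggmul : ∀ va vb : ℕ, va ∣ a → vb ∣ b →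
        ggg c (a * b) (va * vb) = ggg c a va * ggg c b vb := by
      intro va vb hva hvb
      rw [ggg, hpf, Finset.prod_union hdisj]
      congr 1
      · refine Finset.prod_congr rfl fun p hpa => ?_
        have hiff : p ∣ va * vb ↔ p ∣ va := by
          constructor
          · intro h
            rcases (Nat.prime_of_mem_primeFactors hpa).dvd_mul.1 h with h' | h'
            · exact h'
            · exact absurd (h'.trans hvb) (hndb p hpa)
          · exact fun h => dvd_mul_of_dvd_left h vb
        simp only [hiff]
      · refine Finset.prod_congr rfl fun p hpb => ?_
        have hiff : p ∣ va * vb ↔ p ∣ vb := by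
          constructor
          · intro h
            rcases (Nat.prime_of_mem_primeFactors hpb).dvd_mul.1 h with h' | h'
            · exact absurd (h'.trans hva) (hnda p hpb)
            · exact h'
          · exact fun h => dvd_mul_of_dvd_right h va
        simp only [hiff]
    obtain ⟨ua, ub, hua, hub, rfl⟩ := Nat.dvd_mul.1 hu
    rw [sum_div_coprime_mul hA0 hB0 hab
      (fun v => if Nat.gcd (ua * ub) v = 1 then ggg c (a * b) v else 0)]
    have hterm : ∀ va ∈ a.divisors, ∀ vb ∈ b.divisors,
        (if Nat.gcd (ua * ub) (va * vb) = 1 then ggg c (a * b) (va * vb) else 0)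
          = (if Nat.gcd ua va = 1 then ggg c a va else 0)
            * (if Nat.gcd ub vb = 1 then ggg c b vb else 0) := by
      intro va hva vb hvb
      rw [Nat.mem_divisors] at hva hvb
      have hiff : Nat.gcd (ua * ub) (va * vb) = 1
          ↔ (Nat.gcd ua va = 1 ∧ Nat.gcd ub vb = 1) := by
        simp only [← Nat.coprime_iff_gcd_eq_one]
        rw [Nat.coprime_mul_iff_left, Nat.coprime_mul_iff_right,
          Nat.coprime_mul_iff_right]
        have c1 : Nat.Coprime ua vb := cab hua hvb.1
        have c2 : Nat.Coprime ub va := (cab hva.1 hub).symm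
        tauto
      rw [hggmul va vb hva.1 hvb.1]
      simp only [hiff]
      by_cases h1 : Nat.gcd ua va = 1 <;> by_cases h2 : Nat.gcd ub vb = 1 <;>
        simp [h1, h2]
    rw [Finset.sum_congr rfl fun va hva =>
      Finset.sum_congr rfl fun vb hvb => hterm va hva vb hvb]
    rw [← Finset.sum_mul_sum]
    rw [iha hA0 hquada ua hua, ihb hB0 hquadb ub hub,
      hpf, Finset.prod_union hdisj, hggmul ua ub hua hub]
    ring

/-- For `n > 1` with prime factorization `n = p₁^{a₁} ⋯ p_r^{a_r}` and every choice
function `x` assigning to each prime factor one of the values `λ₁ = (1+√(4aᵢ+1))/2`,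
`λ₂ = (1-√(4aᵢ+1))/2`, the product `∏ᵢ λ_{xᵢ}^{(i)}` is an eigenvalue of the adjacency
matrix of the modified divisor prime graph of `n`. -/
theorem prod_eigenvalue_modifiedDivisorPrimeGraph (n : ℕ) (hn : 1 < n)
    (A : Matrix {d : ℕ // d ∈ n.divisors} {d : ℕ // d ∈ n.divisors} ℝ)
    (hA : ∀ u v : {d : ℕ // d ∈ n.divisors},
      A u v = if Nat.gcd u.1 v.1 = 1 then 1 else 0)
    (x : ℕ → Bool) :
    ∃ Y : {d : ℕ // d ∈ n.divisors} → ℝ, Y ≠ 0 ∧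
      A.mulVec Y =
        (∏ p ∈ n.primeFactors,
          if x p then (1 + Real.sqrt (4 * (n.factorization p : ℝ) + 1)) / 2
          else (1 - Real.sqrt (4 * (n.factorization p : ℝ) + 1)) / 2) • Y := by
  have hn0 : n ≠ 0 := by omega
  set c : ℕ → ℝ := fun p =>
    if x p then (1 + Real.sqrt (4 * (n.factorization p : ℝ) + 1)) / 2
    else (1 - Real.sqrt (4 * (n.factorization p : ℝ) + 1)) / 2 with hc
  have hquad : ∀ p ∈ n.primeFactors, c p ^ 2 = c p + (n.factorization p : ℝ) := by
    intro p hp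
    have hs : Real.sqrt (4 * (n.factorization p : ℝ) + 1) ^ 2
        = 4 * (n.factorization p : ℝ) + 1 :=
      Real.sq_sqrt (by positivity)
    rw [hc]
    by_cases hx : x p <;> simp only [hx, Bool.false_eq_true, if_true, if_false] <;> nlinarith [hs]
  refine ⟨fun d => ggg c n d.1, ?_, ?_⟩
  · intro h
    have h1 := congrFun h ⟨n, Nat.mem_divisors_self n hn0⟩
    have h2 : ggg c n n = 1 :=
      Finset.prod_eq_one fun p hp => if_pos (Nat.dvd_of_mem_primeFactors hp)
    rw [h2] at h1
    exact one_ne_zero h1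
  · funext u
    have hmv : A.mulVec (fun d => ggg c n d.1) u
        = ∑ v ∈ n.divisors, if Nat.gcd u.1 v = 1 then ggg c n v else 0 := by
      rw [Matrix.mulVec, dotProduct]
      rw [← Finset.sum_coe_sort n.divisors
        (fun v => if Nat.gcd u.1 v = 1 then ggg c n v else 0)]
      refine Finset.sum_congr rfl fun v _ => ?_
      rw [hA]
      by_cases h : Nat.gcd u.1 v.1 = 1 <;> simp [h]
    rw [hmv, key c n hn0 hquad u.1 (Nat.mem_divisors.1 u.2).1]
    simp [hc]
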